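/- Let H be a Hopf algebra with twist F and let V, W be left H-modules. Then D_F : Hom_K(V,W) → Hom_K(V,W), P ↦ (f̄^α ▶ P) ∘ (f̄_α ▷), is bijective and satisfies D_F(P ∘_⋆ Q) = D_F(P) ∘ D_F(Q) for composable K-linear maps P, Q, where P ∘_⋆ Q := (f̄^α ▶ P) ∘ (f̄_α ▶ Q), and D_F(id_V) = id_V. -/

import Mathlib

open TensorProduct

noncomputable section

variable (K : Type*) [CommRing K] (H : Type*) [Ring H] [HopfAlgebra K H]

namespace TwistPaper

def ΔH : H →ₗ[K] H ⊗[K] H := Coalgebra.comul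
def εH : H →ₗ[K] K := Coalgebra.counit
def SH : H →ₗ[K] H := HopfAlgebra.antipode (R := K)

def ins3 : H ⊗[K] H →ₗ[K] H ⊗[K] (H ⊗[K] H) :=
  LinearMap.lTensor H ((TensorProduct.mk K H H).flip 1)
def ins1 : H ⊗[K] H →ₗ[K] H ⊗[K] (H ⊗[K] H) :=
  TensorProduct.mk K H (H ⊗[K] H) 1
def comulLeft : H ⊗[K] H →ₗ[K] H ⊗[K] (H ⊗[K] H) :=
  (TensorProduct.assoc K H H H).toLinearMap ∘ₗ (ΔH K H).rTensor H
def comulRight : H ⊗[K] H →ₗ[K] H ⊗[K] (H ⊗[K] H) :=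
  (ΔH K H).lTensor H
def counitLeft : H ⊗[K] H →ₗ[K] H :=
  (TensorProduct.lid K H).toLinearMap ∘ₗ (εH K H).rTensor H
def counitRight : H ⊗[K] H →ₗ[K] H :=
  (TensorProduct.rid K H).toLinearMap ∘ₗ (εH K H).lTensor H

/-- `F` is a twist of the Hopf algebra `H` with inverse `Finv`. -/
structure IsTwist (F Finv : H ⊗[K] H) : Prop where
  mul_inv : F * Finv = 1
  inv_mul : Finv * F = 1
  cocycle : ins3 K H F * comulLeft K H F = ins1 K H F * comulRight K H F
  counit_left : counitLeft K H F = 1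
  counit_right : counitRight K H F = 1

/-- `sw x f g c v w = Σ c (f x¹ v) (g x² w)` for `x = Σ x¹ ⊗ x²`. -/
def sw {V W V' W' Z : Type*}
    [AddCommGroup V] [Module K V] [AddCommGroup W] [Module K W]
    [AddCommGroup V'] [Module K V'] [AddCommGroup W'] [Module K W']
    [AddCommGroup Z] [Module K Z]
    (x : H ⊗[K] H) (f : H →ₗ[K] V →ₗ[K] V') (g : H →ₗ[K] W →ₗ[K] W')
    (c : V' →ₗ[K] W' →ₗ[K] Z) : V →ₗ[K] W →ₗ[K] Z :=
  ((TensorProduct.mapBilinear (σ₁₂ := RingHom.id K) (M := H) (N := H) (M₂ := V') (N₂ := W')).compr₂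
      (TensorProduct.lift c ∘ₗ LinearMap.applyₗ (R := K) x)).compl₁₂ f.flip g.flip

/-- `ρ` is a left `H`-module structure. -/
def IsHAction {V : Type*} [AddCommGroup V] [Module K V] (ρ : H →ₗ[K] V →ₗ[K] V) : Prop :=
  (∀ ξ ζ : H, ∀ v : V, ρ (ξ * ζ) v = ρ ξ (ρ ζ v)) ∧ (∀ v : V, ρ 1 v = v)

/-- `(A, m, ρ)` is a left `H`-module algebra. -/
def IsModuleAlgebra {A : Type*} [AddCommGroup A] [Module K A]
    (m : A →ₗ[K] A →ₗ[K] A) (ρ : H →ₗ[K] A →ₗ[K] A) : Prop :=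
  IsHAction K H ρ ∧ ∀ (ξ : H) (a b : A), ρ ξ (m a b) = sw K H (ΔH K H ξ) ρ ρ m a b

/-- `conjEnd f g (η ⊗ ζ) P = f η ∘ₗ P ∘ₗ g ζ` on `Hom_K(V,W)`. -/
def conjEnd {V W : Type*} [AddCommGroup V] [Module K V] [AddCommGroup W] [Module K W]
    (f : H →ₗ[K] W →ₗ[K] W) (g : H →ₗ[K] V →ₗ[K] V) :
    H ⊗[K] H →ₗ[K] (V →ₗ[K] W) →ₗ[K] (V →ₗ[K] W) :=
  TensorProduct.lift
    ((LinearMap.llcomp K (V →ₗ[K] W) (V →ₗ[K] W) (V →ₗ[K] W) ∘ₗ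
        (LinearMap.llcomp K V W W ∘ₗ f)).compl₂
      ((LinearMap.llcomp K V V W).flip ∘ₗ g))

/-- `twistEnd F1 F2 (η ⊗ ζ) = F1 η ∘ₗ F2 ζ` as an operator on `X`. -/
def twistEnd {X : Type*} [AddCommGroup X] [Module K X]
    (F1 F2 : H →ₗ[K] X →ₗ[K] X) : H ⊗[K] H →ₗ[K] X →ₗ[K] X :=
  TensorProduct.lift ((LinearMap.llcomp K X X X ∘ₗ F1).compl₂ F2)

/-- The `H`-adjoint action `ξ ▶ P = (ξ₁ ▷) ∘ P ∘ (S(ξ₂) ▷)` on `Hom_K(V,W)`. -/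
def adjHom {V W : Type*} [AddCommGroup V] [Module K V] [AddCommGroup W] [Module K W]
    (ρW : H →ₗ[K] W →ₗ[K] W) (ρV : H →ₗ[K] V →ₗ[K] V) :
    H →ₗ[K] (V →ₗ[K] W) →ₗ[K] (V →ₗ[K] W) :=
  conjEnd K H ρW (ρV ∘ₗ SH K H) ∘ₗ ΔH K H

/-- The deformation map `D_F(P) = (f̄^α ▶ P) ∘ (f̄_α ▷)` on `Hom_K(V,W)`. -/
def DFhom {V W : Type*} [AddCommGroup V] [Module K V] [AddCommGroup W] [Module K W]
    (Finv : H ⊗[K] H) (ρW : H →ₗ[K] W →ₗ[K] W) (ρV : H →ₗ[K] V →ₗ[K] V) :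
    (V →ₗ[K] W) →ₗ[K] (V →ₗ[K] W) :=
  twistEnd K H ((LinearMap.llcomp K V V W).flip ∘ₗ ρV) (adjHom K H ρW ρV)
    (TensorProduct.comm K H H Finv)


-- ===== auxiliary definitions =====

/-- `a ⊗ b ↦ S(a) * b` -/
def muL : H ⊗[K] H →ₗ[K] H := LinearMap.mul' K H ∘ₗ (SH K H).rTensor H
/-- `a ⊗ b ↦ a * S(b)` -/
def muR : H ⊗[K] H →ₗ[K] H := LinearMap.mul' K H ∘ₗ (SH K H).lTensor H
/-- `a ⊗ b ↦ a ⊗ S(b)` -/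
def idS : H ⊗[K] H →ₗ[K] H ⊗[K] H := (SH K H).lTensor H
/-- `a ⊗ (b ⊗ c) ↦ a ⊗ (S(b) * c)` -/
def Phi1 : H ⊗[K] (H ⊗[K] H) →ₗ[K] H ⊗[K] H := LinearMap.lTensor H (muL K H)
/-- `a ⊗ (b ⊗ c) ↦ (S(a) * b) ⊗ c` -/
def Phi2 : H ⊗[K] (H ⊗[K] H) →ₗ[K] H ⊗[K] H :=
  (muL K H).rTensor H ∘ₗ (TensorProduct.assoc K H H H).symm.toLinearMap
def thetaT : H ⊗[K] H →ₗ[K] H ⊗[K] H := Phi1 K H ∘ₗ comulLeft K H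
def theta2 : H ⊗[K] H →ₗ[K] H ⊗[K] H := Phi2 K H ∘ₗ comulRight K H

-- ===== evaluation lemmas =====

@[simp] lemma muL_tmul (a b : H) : muL K H (a ⊗ₜ b) = SH K H a * b := rfl
@[simp] lemma muR_tmul (a b : H) : muR K H (a ⊗ₜ b) = a * SH K H b := rfl
@[simp] lemma idS_tmul (a b : H) : idS K H (a ⊗ₜ b) = a ⊗ₜ SH K H b := rfl
@[simp] lemma Phi1_tmul (a b c : H) : Phi1 K H (a ⊗ₜ (b ⊗ₜ c)) = a ⊗ₜ (SH K H b * c) := rfl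
@[simp] lemma Phi2_tmul (a b c : H) : Phi2 K H (a ⊗ₜ (b ⊗ₜ c)) = (SH K H a * b) ⊗ₜ c := rfl
@[simp] lemma ins1_apply (x : H ⊗[K] H) : ins1 K H x = 1 ⊗ₜ x := rfl
@[simp] lemma ins3_tmul (a b : H) : ins3 K H (a ⊗ₜ b) = a ⊗ₜ (b ⊗ₜ 1) := rfl
@[simp] lemma comulRight_tmul (a b : H) :
    comulRight K H (a ⊗ₜ b) = a ⊗ₜ (Coalgebra.comul b) := rfl
@[simp] lemma comulLeft_tmul (a b : H) :
    comulLeft K H (a ⊗ₜ b) = (TensorProduct.assoc K H H H) ((Coalgebra.comul a) ⊗ₜ b) := rfl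
@[simp] lemma counitLeft_tmul (a b : H) :
    counitLeft K H (a ⊗ₜ b) = Coalgebra.counit (R := K) a • b := rfl
@[simp] lemma counitRight_tmul (a b : H) :
    counitRight K H (a ⊗ₜ b) = Coalgebra.counit (R := K) b • a := rfl

-- ===== Repr helpers =====

lemma repr_counit_left {ι : Type*} {a : H} (r : Coalgebra.Repr K a ι) :
    ∑ i ∈ r.index, Coalgebra.counit (R := K) (r.left i) • r.right i = a := by
  have := Coalgebra.sum_counit_tmul_eq (R := K) r
  apply_fun (TensorProduct.lid K H) at this
  simp only [map_sum, TensorProduct.lid_tmul, one_smul] at this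
  exact this

lemma repr_counit_right {ι : Type*} {a : H} (r : Coalgebra.Repr K a ι) :
    ∑ i ∈ r.index, Coalgebra.counit (R := K) (r.right i) • r.left i = a := by
  have := Coalgebra.sum_tmul_counit_eq (R := K) r
  apply_fun (TensorProduct.rid K H) at this
  simp only [map_sum, TensorProduct.rid_tmul, one_smul] at this
  exact this

lemma repr_antipode_mul {ι : Type*} {a : H} (r : Coalgebra.Repr K a ι) :
    ∑ i ∈ r.index, SH K H (r.left i) * r.right i = Coalgebra.counit (R := K) a • 1 :=
  HopfAlgebra.sum_antipode_mul_eq_smul r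

lemma repr_mul_antipode {ι : Type*} {a : H} (r : Coalgebra.Repr K a ι) :
    ∑ i ∈ r.index, r.left i * SH K H (r.right i) = Coalgebra.counit (R := K) a • 1 :=
  HopfAlgebra.sum_mul_antipode_eq_smul r

lemma SH_one : SH K H 1 = 1 := by
  have := HopfAlgebra.mul_antipode_rTensor_comul_apply (R := K) (a := (1:H))
  simpa [Bialgebra.comul_one, Algebra.TensorProduct.one_def, SH] using this

/-- product representation of `comul (a*b)` -/
def reprMul {ι κ : Type*} {a b : H} (ra : Coalgebra.Repr K a ι) (rb : Coalgebra.Repr K b κ) :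
    Coalgebra.Repr K (a * b) (ι × κ) where
  index := ra.index ×ˢ rb.index
  left := fun p => ra.left p.1 * rb.left p.2
  right := fun p => ra.right p.1 * rb.right p.2
  eq := by
    rw [show Coalgebra.comul (R := K) (a * b) = Coalgebra.comul a * Coalgebra.comul b from
      Bialgebra.comul_mul a b, ← ra.eq, ← rb.eq, Finset.sum_mul_sum]
    rw [Finset.sum_product]
    simp [Algebra.TensorProduct.tmul_mul_tmul]

lemma sweedler3 {E : Type*} [AddCommMonoid E] [Module K E] {ι κ Λ : Type*}
    (Φ : H ⊗[K] (H ⊗[K] H) →ₗ[K] E) {a : H} (r : Coalgebra.Repr K a ι)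
    (r1 : ∀ i, Coalgebra.Repr K (r.left i) κ) (r2 : ∀ i, Coalgebra.Repr K (r.right i) Λ) :
    ∑ i ∈ r.index, ∑ k ∈ (r1 i).index,
        Φ ((r1 i).left k ⊗ₜ ((r1 i).right k ⊗ₜ r.right i)) =
      ∑ i ∈ r.index, ∑ l ∈ (r2 i).index,
        Φ (r.left i ⊗ₜ ((r2 i).left l ⊗ₜ (r2 i).right l)) := by
  have := Coalgebra.sum_tmul_tmul_eq (R := K) r r1 r2
  apply_fun Φ at this
  simpa [map_sum] using this

-- ===== antipode is anti-multiplicative =====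

/-- `x ⊗ (y ⊗ z) ↦ S(x*u) * ((y*v) * (S w * S z))` -/
def q4r (u v w : H) : H ⊗[K] (H ⊗[K] H) →ₗ[K] H :=
  LinearMap.mul' K H ∘ₗ
    TensorProduct.map (SH K H ∘ₗ LinearMap.mulRight K u)
      (LinearMap.mul' K H ∘ₗ
        TensorProduct.map (LinearMap.mulRight K v)
          (LinearMap.mulLeft K (SH K H w) ∘ₗ SH K H))

@[simp] lemma q4r_tmul (u v w x y z : H) :
    q4r K H u v w (x ⊗ₜ (y ⊗ₜ z)) =
      SH K H (x * u) * ((y * v) * (SH K H w * SH K H z)) := rfl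

/-- `x ⊗ (y ⊗ z) ↦ S(u*x) * ((v*y) * (S z * S w))` -/
def q4l (u v w : H) : H ⊗[K] (H ⊗[K] H) →ₗ[K] H :=
  LinearMap.mul' K H ∘ₗ
    TensorProduct.map (SH K H ∘ₗ LinearMap.mulLeft K u)
      (LinearMap.mul' K H ∘ₗ
        TensorProduct.map (LinearMap.mulLeft K v)
          (LinearMap.mulRight K (SH K H w) ∘ₗ SH K H))

@[simp] lemma q4l_tmul (u v w x y z : H) :
    q4l K H u v w (x ⊗ₜ (y ⊗ₜ z)) =
      SH K H (u * x) * ((v * y) * (SH K H z * SH K H w)) := rfl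

lemma SH_mul (a b : H) : SH K H (a * b) = SH K H b * SH K H a := by
  classical
  set s := SH K H with hs
  let ra := Coalgebra.Repr.arbitrary K a
  let rb := Coalgebra.Repr.arbitrary K b
  let ra1 : ∀ i, Coalgebra.Repr K (ra.left i) (H × H) := fun i => Coalgebra.Repr.arbitrary K _
  let ra2 : ∀ i, Coalgebra.Repr K (ra.right i) (H × H) := fun i => Coalgebra.Repr.arbitrary K _
  let rb1 : ∀ j, Coalgebra.Repr K (rb.left j) (H × H) := fun j => Coalgebra.Repr.arbitrary K _
  let rb2 : ∀ j, Coalgebra.Repr K (rb.right j) (H × H) := fun j => Coalgebra.Repr.arbitrary K _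
  -- Way 1: the master sum (everything right-nested) evaluates to S (a*b)
  have way1 :
      (∑ i ∈ ra.index, ∑ k ∈ (ra2 i).index, ∑ j ∈ rb.index, ∑ l ∈ (rb2 j).index,
        s (ra.left i * rb.left j) *
          (((ra2 i).left k * (rb2 j).left l) *
            (s ((rb2 j).right l) * s ((ra2 i).right k)))) = s (a * b) := by
    have hinner : ∀ i, ∀ k ∈ (ra2 i).index,
        (∑ j ∈ rb.index, ∑ l ∈ (rb2 j).index,
          s (ra.left i * rb.left j) *
            (((ra2 i).left k * (rb2 j).left l) *
              (s ((rb2 j).right l) * s ((ra2 i).right k)))) =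
        s (ra.left i * b) * ((ra2 i).left k * s ((ra2 i).right k)) := by
      intro i k _
      have hj : ∀ j ∈ rb.index,
          (∑ l ∈ (rb2 j).index,
            s (ra.left i * rb.left j) *
              (((ra2 i).left k * (rb2 j).left l) *
                (s ((rb2 j).right l) * s ((ra2 i).right k)))) =
          Coalgebra.counit (R := K) (rb.right j) •
            (s (ra.left i * rb.left j) * ((ra2 i).left k * s ((ra2 i).right k))) := by
        intro j _
        have : ∀ l ∈ (rb2 j).index,
            s (ra.left i * rb.left j) *
              (((ra2 i).left k * (rb2 j).left l) *
                (s ((rb2 j).right l) * s ((ra2 i).right k))) =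
            s (ra.left i * rb.left j) *
              ((ra2 i).left k *
                (((rb2 j).left l * s ((rb2 j).right l)) * s ((ra2 i).right k))) := by
          intro l _; simp only [mul_assoc]
        rw [Finset.sum_congr rfl this, ← Finset.mul_sum, ← Finset.mul_sum, ← Finset.sum_mul,
          repr_mul_antipode K H (rb2 j), smul_mul_assoc, one_mul, mul_smul_comm, mul_smul_comm]
      rw [Finset.sum_congr rfl hj]
      have := repr_counit_right K H rb
      calc
        ∑ j ∈ rb.index, Coalgebra.counit (R := K) (rb.right j) •
            (s (ra.left i * rb.left j) * ((ra2 i).left k * s ((ra2 i).right k)))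
          = ∑ j ∈ rb.index,
              ((LinearMap.mulRight K ((ra2 i).left k * s ((ra2 i).right k))) ∘ₗ s ∘ₗ
                LinearMap.mulLeft K (ra.left i))
              (Coalgebra.counit (R := K) (rb.right j) • rb.left j) := by
            simp [map_smul, mul_assoc]
        _ = s (ra.left i * b) * ((ra2 i).left k * s ((ra2 i).right k)) := by
            rw [← map_sum, repr_counit_right K H rb]; simp [mul_assoc]
    calc
      (∑ i ∈ ra.index, ∑ k ∈ (ra2 i).index, ∑ j ∈ rb.index, ∑ l ∈ (rb2 j).index,
        s (ra.left i * rb.left j) *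
          (((ra2 i).left k * (rb2 j).left l) *
            (s ((rb2 j).right l) * s ((ra2 i).right k))))
        = ∑ i ∈ ra.index, ∑ k ∈ (ra2 i).index,
            s (ra.left i * b) * ((ra2 i).left k * s ((ra2 i).right k)) := by
          exact Finset.sum_congr rfl fun i _ => Finset.sum_congr rfl (hinner i)
      _ = ∑ i ∈ ra.index,
            Coalgebra.counit (R := K) (ra.right i) • s (ra.left i * b) := by
          refine Finset.sum_congr rfl fun i _ => ?_
          rw [← Finset.mul_sum, repr_mul_antipode K H (ra2 i), mul_smul_comm, mul_one]
      _ = s (a * b) := by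
          calc
            ∑ i ∈ ra.index, Coalgebra.counit (R := K) (ra.right i) • s (ra.left i * b)
              = ∑ i ∈ ra.index, (s ∘ₗ LinearMap.mulRight K b)
                  (Coalgebra.counit (R := K) (ra.right i) • ra.left i) := by
                simp [map_smul]
            _ = s (a * b) := by rw [← map_sum, repr_counit_right K H ra]; simp [mul_assoc]
  -- switch the nesting of the b-coproducts
  have switchb :
      (∑ i ∈ ra.index, ∑ k ∈ (ra2 i).index, ∑ j ∈ rb.index, ∑ l ∈ (rb2 j).index,
        s (ra.left i * rb.left j) *
          (((ra2 i).left k * (rb2 j).left l) *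
            (s ((rb2 j).right l) * s ((ra2 i).right k)))) =
      (∑ i ∈ ra.index, ∑ k ∈ (ra2 i).index, ∑ j ∈ rb.index, ∑ l ∈ (rb1 j).index,
        s (ra.left i * (rb1 j).left l) *
          (((ra2 i).left k * (rb1 j).right l) *
            (s (rb.right j) * s ((ra2 i).right k)))) := by
    refine Finset.sum_congr rfl fun i _ => Finset.sum_congr rfl fun k _ => ?_
    have := (sweedler3 K H
      (q4l K H (ra.left i) ((ra2 i).left k) ((ra2 i).right k)) rb rb1 rb2).symm
    simpa using this
  -- switch the nesting of the a-coproducts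
  have switcha :
      (∑ i ∈ ra.index, ∑ k ∈ (ra2 i).index, ∑ j ∈ rb.index, ∑ l ∈ (rb1 j).index,
        s (ra.left i * (rb1 j).left l) *
          (((ra2 i).left k * (rb1 j).right l) *
            (s (rb.right j) * s ((ra2 i).right k)))) =
      (∑ i ∈ ra.index, ∑ k ∈ (ra1 i).index, ∑ j ∈ rb.index, ∑ l ∈ (rb1 j).index,
        s ((ra1 i).left k * (rb1 j).left l) *
          (((ra1 i).right k * (rb1 j).right l) *
            (s (rb.right j) * s (ra.right i)))) := by
    have := (sweedler3 K H
      (∑ j ∈ rb.index, ∑ l ∈ (rb1 j).index,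
        q4r K H ((rb1 j).left l) ((rb1 j).right l) (rb.right j)) ra ra1 ra2).symm
    simpa [LinearMap.sum_apply] using this
  -- Way 2 : the all-left-nested sum evaluates to S b * S a
  have way2 :
      (∑ i ∈ ra.index, ∑ k ∈ (ra1 i).index, ∑ j ∈ rb.index, ∑ l ∈ (rb1 j).index,
        s ((ra1 i).left k * (rb1 j).left l) *
          (((ra1 i).right k * (rb1 j).right l) *
            (s (rb.right j) * s (ra.right i)))) = s b * s a := by
    have hswap :
        (∑ i ∈ ra.index, ∑ k ∈ (ra1 i).index, ∑ j ∈ rb.index, ∑ l ∈ (rb1 j).index,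
          s ((ra1 i).left k * (rb1 j).left l) *
            (((ra1 i).right k * (rb1 j).right l) *
              (s (rb.right j) * s (ra.right i)))) =
        (∑ i ∈ ra.index, ∑ j ∈ rb.index, ∑ k ∈ (ra1 i).index, ∑ l ∈ (rb1 j).index,
          s ((ra1 i).left k * (rb1 j).left l) *
            (((ra1 i).right k * (rb1 j).right l) *
              (s (rb.right j) * s (ra.right i)))) :=
      Finset.sum_congr rfl fun i _ => Finset.sum_comm
    rw [hswap]
    have hij : ∀ i ∈ ra.index, ∀ j ∈ rb.index,
        (∑ k ∈ (ra1 i).index, ∑ l ∈ (rb1 j).index,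
          s ((ra1 i).left k * (rb1 j).left l) *
            (((ra1 i).right k * (rb1 j).right l) *
              (s (rb.right j) * s (ra.right i)))) =
        Coalgebra.counit (R := K) (ra.left i) •
          (Coalgebra.counit (R := K) (rb.left j) •
            (s (rb.right j) * s (ra.right i))) := by
      intro i _ j _
      have hm := repr_antipode_mul K H (reprMul K H (ra1 i) (rb1 j))
      simp only [reprMul] at hm
      rw [Finset.sum_product] at hm
      calc
        (∑ k ∈ (ra1 i).index, ∑ l ∈ (rb1 j).index,
          s ((ra1 i).left k * (rb1 j).left l) *
            (((ra1 i).right k * (rb1 j).right l) *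
              (s (rb.right j) * s (ra.right i)))) =
          (∑ k ∈ (ra1 i).index, ∑ l ∈ (rb1 j).index,
            s ((ra1 i).left k * (rb1 j).left l) * ((ra1 i).right k * (rb1 j).right l)) *
              (s (rb.right j) * s (ra.right i)) := by
            simp only [Finset.sum_mul, mul_assoc]
        _ = Coalgebra.counit (R := K) (ra.left i) •
              (Coalgebra.counit (R := K) (rb.left j) •
                (s (rb.right j) * s (ra.right i))) := by
            rw [hm, Bialgebra.counit_mul, smul_mul_assoc, one_mul, mul_smul]
    rw [Finset.sum_congr rfl fun i hi => Finset.sum_congr rfl (hij i hi)]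
    calc
      (∑ i ∈ ra.index, ∑ j ∈ rb.index,
        Coalgebra.counit (R := K) (ra.left i) •
          (Coalgebra.counit (R := K) (rb.left j) • (s (rb.right j) * s (ra.right i)))) =
        ∑ i ∈ ra.index, Coalgebra.counit (R := K) (ra.left i) •
          ((LinearMap.mulRight K (s (ra.right i)) ∘ₗ s)
            (∑ j ∈ rb.index, Coalgebra.counit (R := K) (rb.left j) • rb.right j)) := by
          refine Finset.sum_congr rfl fun i _ => ?_
          rw [map_sum, Finset.smul_sum]
          exact Finset.sum_congr rfl fun j _ => by simp
      _ = s b * s a := by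
          rw [repr_counit_left K H rb]
          have : ∀ i ∈ ra.index,
              Coalgebra.counit (R := K) (ra.left i) •
                ((LinearMap.mulRight K (s (ra.right i)) ∘ₗ s) b) =
              (LinearMap.mulLeft K (s b) ∘ₗ s)
                (Coalgebra.counit (R := K) (ra.left i) • ra.right i) := by
            intro i _; simp
          rw [Finset.sum_congr rfl this, ← map_sum, repr_counit_left K H ra]
          simp
  rw [← way1, switchb, switcha, way2]

-- ===== multiplicativity of the structure maps =====

lemma ins1_mul (x y : H ⊗[K] H) : ins1 K H (x * y) = ins1 K H x * ins1 K H y := by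
  simp [Algebra.TensorProduct.tmul_mul_tmul]

lemma ins1_one : ins1 K H 1 = 1 := by
  simp [Algebra.TensorProduct.one_def]

lemma ins3_mul (x y : H ⊗[K] H) : ins3 K H (x * y) = ins3 K H x * ins3 K H y := by
  induction x using TensorProduct.induction_on with
  | zero => simp
  | add u v hu hv => simp [add_mul, map_add, hu, hv]
  | tmul a b =>
    induction y using TensorProduct.induction_on with
    | zero => simp
    | add u v hu hv => simp [mul_add, map_add, hu, hv]
    | tmul c d => simp [Algebra.TensorProduct.tmul_mul_tmul]

lemma ins3_one : ins3 K H 1 = 1 := by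
  simp [Algebra.TensorProduct.one_def]

lemma comulRight_mul (x y : H ⊗[K] H) :
    comulRight K H (x * y) = comulRight K H x * comulRight K H y := by
  induction x using TensorProduct.induction_on with
  | zero => simp
  | add u v hu hv => simp [add_mul, map_add, hu, hv]
  | tmul a b =>
    induction y using TensorProduct.induction_on with
    | zero => simp
    | add u v hu hv => simp [mul_add, map_add, hu, hv]
    | tmul c d =>
      simp [Algebra.TensorProduct.tmul_mul_tmul, Bialgebra.comul_mul]

lemma comulRight_one : comulRight K H 1 = 1 := by
  simp [Algebra.TensorProduct.one_def, Bialgebra.comul_one]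

lemma assocL_mul (z w : (H ⊗[K] H) ⊗[K] H) :
    (TensorProduct.assoc K H H H) (z * w) =
      (TensorProduct.assoc K H H H) z * (TensorProduct.assoc K H H H) w := by
  have h : ∀ t : (H ⊗[K] H) ⊗[K] H, (TensorProduct.assoc K H H H) t =
      (Algebra.TensorProduct.assoc K K K H H H) t := fun t => rfl
  rw [h, h, h, map_mul]

lemma comulLeft_mul (x y : H ⊗[K] H) :
    comulLeft K H (x * y) = comulLeft K H x * comulLeft K H y := by
  induction x using TensorProduct.induction_on with
  | zero => simp
  | add u v hu hv => simp [add_mul, map_add, hu, hv]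
  | tmul a b =>
    induction y using TensorProduct.induction_on with
    | zero => simp
    | add u v hu hv => simp [mul_add, map_add, hu, hv]
    | tmul c d =>
      have : comulLeft K H ((a ⊗ₜ b) * (c ⊗ₜ d)) =
          (TensorProduct.assoc K H H H)
            ((Coalgebra.comul a * Coalgebra.comul c) ⊗ₜ (b * d)) := by
        simp [Algebra.TensorProduct.tmul_mul_tmul, Bialgebra.comul_mul]
      rw [this, show (Coalgebra.comul a * Coalgebra.comul c) ⊗ₜ[K] (b * d) =
          ((Coalgebra.comul a) ⊗ₜ[K] b) * ((Coalgebra.comul c) ⊗ₜ[K] d) from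
        (Algebra.TensorProduct.tmul_mul_tmul _ _ _ _).symm, assocL_mul]
      simp

lemma comulLeft_one : comulLeft K H 1 = 1 := by
  simp [Algebra.TensorProduct.one_def, Bialgebra.comul_one]

lemma counitLeft_mul (x y : H ⊗[K] H) :
    counitLeft K H (x * y) = counitLeft K H x * counitLeft K H y := by
  induction x using TensorProduct.induction_on with
  | zero => simp
  | add u v hu hv => simp [add_mul, map_add, hu, hv]
  | tmul a b =>
    induction y using TensorProduct.induction_on with
    | zero => simp
    | add u v hu hv => simp [mul_add, map_add, hu, hv]
    | tmul c d =>
      simp [Algebra.TensorProduct.tmul_mul_tmul, Bialgebra.counit_mul,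
        smul_mul_smul_comm, smul_smul, mul_comm]

lemma counitRight_mul (x y : H ⊗[K] H) :
    counitRight K H (x * y) = counitRight K H x * counitRight K H y := by
  induction x using TensorProduct.induction_on with
  | zero => simp
  | add u v hu hv => simp [add_mul, map_add, hu, hv]
  | tmul a b =>
    induction y using TensorProduct.induction_on with
    | zero => simp
    | add u v hu hv => simp [mul_add, map_add, hu, hv]
    | tmul c d =>
      simp [Algebra.TensorProduct.tmul_mul_tmul, Bialgebra.counit_mul,
        smul_mul_smul_comm, smul_smul, mul_comm]

-- ===== consequences of the twist axioms =====

lemma counitLeft_one : counitLeft K H 1 = 1 := by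
  simp [Algebra.TensorProduct.one_def]

lemma counitRight_one : counitRight K H 1 = 1 := by
  simp [Algebra.TensorProduct.one_def]

variable {F Finv : H ⊗[K] H}

lemma counitLeft_inv (hF : IsTwist K H F Finv) : counitLeft K H Finv = 1 := by
  have h := counitLeft_mul K H Finv F
  rw [hF.inv_mul, hF.counit_left, mul_one, counitLeft_one] at h
  exact h.symm

lemma counitRight_inv (hF : IsTwist K H F Finv) : counitRight K H Finv = 1 := by
  have h := counitRight_mul K H Finv F
  rw [hF.inv_mul, hF.counit_right, mul_one, counitRight_one] at h
  exact h.symm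

lemma star_id (hF : IsTwist K H F Finv) :
    comulRight K H F * comulLeft K H Finv = ins1 K H Finv * ins3 K H F := by
  have h1 : comulRight K H F = ins1 K H Finv * (ins3 K H F * comulLeft K H F) := by
    rw [hF.cocycle, ← mul_assoc, ← ins1_mul, hF.inv_mul, ins1_one, one_mul]
  rw [h1, mul_assoc, mul_assoc, ← comulLeft_mul, hF.mul_inv, comulLeft_one, mul_one]

lemma cocycle_inv (hF : IsTwist K H F Finv) :
    comulLeft K H Finv * ins3 K H Finv = comulRight K H Finv * ins1 K H Finv := by
  have hPr : (ins3 K H F * comulLeft K H F) * (comulLeft K H Finv * ins3 K H Finv) = 1 := by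
    rw [mul_assoc, ← mul_assoc (comulLeft K H F), ← comulLeft_mul, hF.mul_inv,
      comulLeft_one, one_mul, ← ins3_mul, hF.mul_inv, ins3_one]
  have hlP : (comulRight K H Finv * ins1 K H Finv) * (ins1 K H F * comulRight K H F) = 1 := by
    rw [mul_assoc, ← mul_assoc (ins1 K H Finv), ← ins1_mul, hF.inv_mul,
      ins1_one, one_mul, ← comulRight_mul, hF.inv_mul, comulRight_one]
  calc comulLeft K H Finv * ins3 K H Finv
      = ((comulRight K H Finv * ins1 K H Finv) * (ins1 K H F * comulRight K H F)) *
          (comulLeft K H Finv * ins3 K H Finv) := by rw [hlP, one_mul]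
    _ = (comulRight K H Finv * ins1 K H Finv) *
          ((ins3 K H F * comulLeft K H F) * (comulLeft K H Finv * ins3 K H Finv)) := by
        rw [← hF.cocycle, mul_assoc]
    _ = comulRight K H Finv * ins1 K H Finv := by rw [hPr, mul_one]

-- ===== contraction identities =====

lemma muL_comul (a : H) :
    muL K H (Coalgebra.comul a) = Coalgebra.counit (R := K) a • 1 := by
  have := HopfAlgebra.mul_antipode_rTensor_comul_apply (R := K) (a := a)
  rw [Algebra.smul_def, mul_one]
  simpa [muL, SH] using this

lemma muR_comul (a : H) :
    muR K H (Coalgebra.comul a) = Coalgebra.counit (R := K) a • 1 := by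
  have := HopfAlgebra.mul_antipode_lTensor_comul_apply (R := K) (a := a)
  rw [Algebra.smul_def, mul_one]
  simpa [muR, SH] using this

lemma phi1_assoc_tmul (w : H ⊗[K] H) (d : H) :
    Phi1 K H ((TensorProduct.assoc K H H H) (w ⊗ₜ d)) = idS K H w * (1 ⊗ₜ d) := by
  induction w using TensorProduct.induction_on with
  | zero =>
    rw [zero_tmul, LinearEquiv.map_zero, map_zero, map_zero, zero_mul]
  | add u v hu hv => simp [add_tmul, map_add, add_mul, hu, hv]
  | tmul p q => simp [Algebra.TensorProduct.tmul_mul_tmul]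

lemma thetaT_tmul (c d : H) :
    thetaT K H (c ⊗ₜ d) = idS K H (Coalgebra.comul c) * (1 ⊗ₜ d) := by
  have : thetaT K H (c ⊗ₜ d) =
      Phi1 K H ((TensorProduct.assoc K H H H) ((Coalgebra.comul c) ⊗ₜ d)) := rfl
  rw [this, phi1_assoc_tmul]

lemma C1pure (a d : H) (z w : H ⊗[K] H) :
    Phi1 K H ((a ⊗ₜ z) * (TensorProduct.assoc K H H H) (w ⊗ₜ d)) =
      (a ⊗ₜ (1:H)) * idS K H w * (1 ⊗ₜ (muL K H z * d)) := by
  induction z using TensorProduct.induction_on with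
  | zero => simp
  | add u v hu hv =>
    simp only [add_tmul, tmul_add, add_mul, mul_add, map_add, hu, hv]
  | tmul z1 z2 =>
    induction w using TensorProduct.induction_on with
    | zero => simp
    | add u v hu hv =>
      simp only [add_tmul, tmul_add, add_mul, mul_add, map_add, hu, hv]
    | tmul w1 w2 =>
      simp [Algebra.TensorProduct.tmul_mul_tmul, SH_mul, mul_assoc]

lemma C1 (x y : H ⊗[K] H) :
    Phi1 K H (comulRight K H x * comulLeft K H y) =
      (counitRight K H x ⊗ₜ (1:H)) * thetaT K H y := by
  induction x using TensorProduct.induction_on with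
  | zero => simp
  | add u v hu hv => simp only [map_add, add_mul, add_tmul, hu, hv]
  | tmul a b =>
    induction y using TensorProduct.induction_on with
    | zero => simp
    | add u v hu hv => simp only [map_add, mul_add, hu, hv]
    | tmul c d =>
      rw [comulRight_tmul, comulLeft_tmul, C1pure, muL_comul, counitRight_tmul,
        thetaT_tmul, smul_mul_assoc, one_mul, tmul_smul, mul_smul_comm,
        ← smul_tmul', smul_mul_assoc, mul_assoc]

lemma C2 (x y : H ⊗[K] H) :
    Phi1 K H (ins1 K H y * ins3 K H x) = idS K H x * (1 ⊗ₜ muL K H y) := by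
  induction x using TensorProduct.induction_on with
  | zero => simp
  | add u v hu hv => simp only [map_add, mul_add, add_mul, tmul_add, hu, hv]
  | tmul a b =>
    induction y using TensorProduct.induction_on with
    | zero => simp
    | add u v hu hv => simp only [map_add, mul_add, add_mul, tmul_add, hu, hv]
    | tmul c d =>
      simp [Algebra.TensorProduct.tmul_mul_tmul, SH_mul, mul_assoc]

lemma thetaT_inv_eq (hF : IsTwist K H F Finv) :
    thetaT K H Finv = idS K H F * (1 ⊗ₜ muL K H Finv) := by
  have h1 := C1 K H F Finv
  rw [hF.counit_right, star_id K H hF, C2, ← Algebra.TensorProduct.one_def, one_mul] at h1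
  exact h1.symm

lemma phi2_tmul_right (a : H) (Z : H ⊗[K] H) :
    Phi2 K H (a ⊗ₜ Z) = (LinearMap.mulLeft K (SH K H a)).rTensor H Z := by
  induction Z using TensorProduct.induction_on with
  | zero => simp
  | add u v hu hv => simp only [map_add, tmul_add, hu, hv]
  | tmul p q => rfl

lemma rT_mulLeft_mul (h : H) (Z y : H ⊗[K] H) :
    (LinearMap.mulLeft K h).rTensor H (Z * y) =
      (LinearMap.mulLeft K h).rTensor H Z * y := by
  induction Z using TensorProduct.induction_on with
  | zero => simp
  | add u v hu hv => simp only [map_add, add_mul, hu, hv]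
  | tmul p q =>
    induction y using TensorProduct.induction_on with
    | zero => simp
    | add u v hu hv => simp only [map_add, mul_add, hu, hv]
    | tmul c d => simp [Algebra.TensorProduct.tmul_mul_tmul, mul_assoc]

lemma C3pure (a b d : H) (w : H ⊗[K] H) :
    Phi2 K H ((TensorProduct.assoc K H H H) (w ⊗ₜ d) * ins3 K H (a ⊗ₜ b)) =
      (SH K H a * (muL K H w * b)) ⊗ₜ d := by
  induction w using TensorProduct.induction_on with
  | zero => simp
  | add u v hu hv => simp only [map_add, add_mul, mul_add, add_tmul, hu, hv]
  | tmul w1 w2 =>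
    simp [Algebra.TensorProduct.tmul_mul_tmul, SH_mul, mul_assoc]

lemma C3 (x y : H ⊗[K] H) :
    Phi2 K H (comulLeft K H y * ins3 K H x) = muL K H x ⊗ₜ counitLeft K H y := by
  induction x using TensorProduct.induction_on with
  | zero => simp
  | add u v hu hv => simp only [map_add, mul_add, add_mul, add_tmul, hu, hv]
  | tmul a b =>
    induction y using TensorProduct.induction_on with
    | zero => simp
    | add u v hu hv => simp only [map_add, mul_add, add_mul, tmul_add, hu, hv]
    | tmul c d =>
      rw [comulLeft_tmul, C3pure, muL_comul, smul_mul_assoc, one_mul, mul_smul_comm,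
        counitLeft_tmul, tmul_smul, ← smul_tmul', muL_tmul]

lemma C4 (x y : H ⊗[K] H) :
    Phi2 K H (comulRight K H x * ins1 K H y) = theta2 K H x * y := by
  induction x using TensorProduct.induction_on with
  | zero => simp
  | add u v hu hv => simp only [map_add, mul_add, add_mul, hu, hv]
  | tmul a b =>
    have h1 : comulRight K H (a ⊗ₜ b) * ins1 K H y = a ⊗ₜ (Coalgebra.comul b * y) := by
      simp [Algebra.TensorProduct.tmul_mul_tmul]
    have h2 : theta2 K H (a ⊗ₜ[K] b) =
        (LinearMap.mulLeft K (SH K H a)).rTensor H (Coalgebra.comul b) := by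
      have : theta2 K H (a ⊗ₜ b) = Phi2 K H (a ⊗ₜ (Coalgebra.comul b)) := rfl
      rw [this, phi2_tmul_right]
    rw [h1, phi2_tmul_right, h2, rT_mulLeft_mul]

lemma theta2_inv_eq (hF : IsTwist K H F Finv) :
    theta2 K H Finv = (muL K H Finv ⊗ₜ (1:H)) * F := by
  have h1 := C3 K H Finv Finv
  have h2 := C4 K H Finv Finv
  rw [counitLeft_inv K H hF] at h1
  have h3 : theta2 K H Finv * Finv = muL K H Finv ⊗ₜ (1:H) := by
    rw [← C4 K H Finv Finv, ← cocycle_inv K H hF]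
    exact h1
  calc theta2 K H Finv = theta2 K H Finv * (Finv * F) := by rw [hF.inv_mul, mul_one]
    _ = (theta2 K H Finv * Finv) * F := by rw [mul_assoc]
    _ = (muL K H Finv ⊗ₜ (1:H)) * F := by rw [h3]

lemma muR_rT_mulLeft (h : H) (z : H ⊗[K] H) :
    muR K H ((LinearMap.mulLeft K h).rTensor H z) = h * muR K H z := by
  induction z using TensorProduct.induction_on with
  | zero => simp
  | add u v hu hv => simp only [map_add, mul_add, hu, hv]
  | tmul p q => simp [mul_assoc]

lemma muR_theta2 (x : H ⊗[K] H) :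
    muR K H (theta2 K H x) = SH K H (counitRight K H x) := by
  induction x using TensorProduct.induction_on with
  | zero => simp
  | add u v hu hv => simp only [map_add, hu, hv]
  | tmul c d =>
    have h2 : theta2 K H (c ⊗ₜ[K] d) =
        (LinearMap.mulLeft K (SH K H c)).rTensor H (Coalgebra.comul d) := by
      have : theta2 K H (c ⊗ₜ d) = Phi2 K H (c ⊗ₜ (Coalgebra.comul d)) := rfl
      rw [this, phi2_tmul_right]
    rw [h2, muR_rT_mulLeft, muR_comul, counitRight_tmul]
    simp [mul_smul_comm]

lemma muR_tmul_one_mul (u : H) (x : H ⊗[K] H) :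
    muR K H ((u ⊗ₜ (1:H)) * x) = u * muR K H x := by
  induction x using TensorProduct.induction_on with
  | zero => simp
  | add w v hw hv => simp only [map_add, mul_add, hw, hv]
  | tmul p q => simp [Algebra.TensorProduct.tmul_mul_tmul, mul_assoc]

lemma UbarU (hF : IsTwist K H F Finv) : muL K H Finv * muR K H F = 1 := by
  have h1 := muR_theta2 K H Finv
  rw [theta2_inv_eq K H hF, counitRight_inv K H hF, SH_one, muR_tmul_one_mul] at h1
  exact h1

lemma mul'_tmul_one_mul (u : H) (z : H ⊗[K] H) :
    LinearMap.mul' K H ((u ⊗ₜ (1:H)) * z) = u * LinearMap.mul' K H z := by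
  induction z using TensorProduct.induction_on with
  | zero => simp
  | add w v hw hv => simp only [map_add, mul_add, hw, hv]
  | tmul p q => simp [Algebra.TensorProduct.tmul_mul_tmul, mul_assoc]

lemma mul'_mul_one_tmul (z : H ⊗[K] H) (v : H) :
    LinearMap.mul' K H (z * ((1:H) ⊗ₜ v)) = LinearMap.mul' K H z * v := by
  induction z using TensorProduct.induction_on with
  | zero => simp
  | add w u hw hu => simp only [map_add, add_mul, hw, hu]
  | tmul p q => simp [Algebra.TensorProduct.tmul_mul_tmul, mul_assoc]

lemma mul'_idS (x : H ⊗[K] H) :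
    LinearMap.mul' K H (idS K H x) = muR K H x := rfl

lemma mul'_thetaT (y : H ⊗[K] H) :
    LinearMap.mul' K H (thetaT K H y) = counitLeft K H y := by
  induction y using TensorProduct.induction_on with
  | zero => simp
  | add u v hu hv => simp only [map_add, hu, hv]
  | tmul c d =>
    rw [thetaT_tmul, mul'_mul_one_tmul, mul'_idS, muR_comul, counitLeft_tmul,
      smul_mul_assoc, one_mul]

lemma UUbar (hF : IsTwist K H F Finv) : muR K H F * muL K H Finv = 1 := by
  have h1 := congrArg (fun t => LinearMap.mul' K H (Phi1 K H t)) (star_id K H hF)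
  simp only [C1, C2, hF.counit_right] at h1
  rw [← Algebra.TensorProduct.one_def, one_mul, mul'_thetaT, counitLeft_inv K H hF,
    mul'_mul_one_tmul, mul'_idS] at h1
  exact h1.symm

-- ===== module-side lemmas =====

section Modules

variable {V W Z : Type*} [AddCommGroup V] [Module K V] [AddCommGroup W] [Module K W]
  [AddCommGroup Z] [Module K Z]

lemma rho_comp {ρ : H →ₗ[K] V →ₗ[K] V} (h : IsHAction K H ρ) (x y : H) :
    ρ (x * y) = ρ x ∘ₗ ρ y := LinearMap.ext fun v => h.1 x y v

lemma rho_one {ρ : H →ₗ[K] V →ₗ[K] V} (h : IsHAction K H ρ) :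
    ρ 1 = LinearMap.id := LinearMap.ext fun v => h.2 v

lemma conjEnd_tmul (f : H →ₗ[K] W →ₗ[K] W) (g : H →ₗ[K] V →ₗ[K] V) (a b : H)
    (P : V →ₗ[K] W) : conjEnd K H f g (a ⊗ₜ b) P = f a ∘ₗ P ∘ₗ g b := rfl

lemma DFhom_tmul (ρW : H →ₗ[K] W →ₗ[K] W) (ρV : H →ₗ[K] V →ₗ[K] V) (a b : H)
    (P : V →ₗ[K] W) :
    DFhom K H (a ⊗ₜ b) ρW ρV P = (adjHom K H ρW ρV a P) ∘ₗ ρV b := by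
  simp [DFhom, twistEnd]; rfl

lemma DFhom_zero (ρW : H →ₗ[K] W →ₗ[K] W) (ρV : H →ₗ[K] V →ₗ[K] V) :
    DFhom K H 0 ρW ρV = 0 := by
  unfold DFhom; rw [map_zero, map_zero]

lemma DFhom_add (ρW : H →ₗ[K] W →ₗ[K] W) (ρV : H →ₗ[K] V →ₗ[K] V) (x y : H ⊗[K] H) :
    DFhom K H (x + y) ρW ρV = DFhom K H x ρW ρV + DFhom K H y ρW ρV := by
  unfold DFhom; rw [map_add, map_add]

lemma sw_tmul (a b : H) (f : H →ₗ[K] (W →ₗ[K] Z) →ₗ[K] (W →ₗ[K] Z))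
    (g : H →ₗ[K] (V →ₗ[K] W) →ₗ[K] (V →ₗ[K] W)) (P : W →ₗ[K] Z) (Q : V →ₗ[K] W) :
    sw K H (a ⊗ₜ b) f g (LinearMap.llcomp K V W Z) P Q = (f a P) ∘ₗ (g b Q) := rfl

lemma sw_zero (f : H →ₗ[K] (W →ₗ[K] Z) →ₗ[K] (W →ₗ[K] Z))
    (g : H →ₗ[K] (V →ₗ[K] W) →ₗ[K] (V →ₗ[K] W)) (P : W →ₗ[K] Z) (Q : V →ₗ[K] W) :
    sw K H 0 f g (LinearMap.llcomp K V W Z) P Q = 0 := by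
  simp [sw]

lemma sw_add (x y : H ⊗[K] H) (f : H →ₗ[K] (W →ₗ[K] Z) →ₗ[K] (W →ₗ[K] Z))
    (g : H →ₗ[K] (V →ₗ[K] W) →ₗ[K] (V →ₗ[K] W)) (P : W →ₗ[K] Z) (Q : V →ₗ[K] W) :
    sw K H (x + y) f g (LinearMap.llcomp K V W Z) P Q =
      sw K H x f g (LinearMap.llcomp K V W Z) P Q +
        sw K H y f g (LinearMap.llcomp K V W Z) P Q := by
  simp [sw]

lemma adjHom_repr (ρW : H →ₗ[K] W →ₗ[K] W) (ρV : H →ₗ[K] V →ₗ[K] V) {ι : Type*} {a : H}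
    (r : Coalgebra.Repr K a ι) (P : V →ₗ[K] W) :
    adjHom K H ρW ρV a P =
      ∑ i ∈ r.index, ρW (r.left i) ∘ₗ P ∘ₗ ρV (SH K H (r.right i)) := by
  have : adjHom K H ρW ρV a P =
      conjEnd K H ρW (ρV ∘ₗ SH K H) (Coalgebra.comul a) P := rfl
  rw [this, ← r.eq, map_sum, LinearMap.sum_apply]
  rfl


lemma sumComp {ι : Type*} (s : Finset ι) (f : ι → (W →ₗ[K] Z)) (g : V →ₗ[K] W) :
    (∑ i ∈ s, f i) ∘ₗ g = ∑ i ∈ s, (f i ∘ₗ g) := by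
  ext v; simp

lemma compSum {ι : Type*} (s : Finset ι) (g : W →ₗ[K] Z) (f : ι → (V →ₗ[K] W)) :
    g ∘ₗ (∑ i ∈ s, f i) = ∑ i ∈ s, (g ∘ₗ f i) := by
  ext v; simp

lemma adjHom_mul {ρW : H →ₗ[K] W →ₗ[K] W} {ρV : H →ₗ[K] V →ₗ[K] V}
    (hV : IsHAction K H ρV) (hW : IsHAction K H ρW) (a b : H) :
    adjHom K H ρW ρV (a * b) = adjHom K H ρW ρV a ∘ₗ adjHom K H ρW ρV b := by
  apply LinearMap.ext; intro P
  classical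
  let ra := Coalgebra.Repr.arbitrary K a
  let rb := Coalgebra.Repr.arbitrary K b
  rw [LinearMap.comp_apply, adjHom_repr K H ρW ρV (reprMul K H ra rb) P,
    adjHom_repr K H ρW ρV ra (adjHom K H ρW ρV b P), adjHom_repr K H ρW ρV rb P]
  simp only [reprMul]
  rw [Finset.sum_product]
  refine Finset.sum_congr rfl fun i _ => ?_
  rw [sumComp, compSum]
  refine Finset.sum_congr rfl fun j _ => ?_
  rw [rho_comp K H hW, SH_mul, rho_comp K H hV]
  simp only [LinearMap.comp_assoc]

lemma ad_rho_collapse {ρW : H →ₗ[K] W →ₗ[K] W} {ρV : H →ₗ[K] V →ₗ[K] V}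
    (hV : IsHAction K H ρV) {ι : Type*} {b : H} (r : Coalgebra.Repr K b ι) (R : V →ₗ[K] W) :
    ∑ i ∈ r.index, (adjHom K H ρW ρV (r.left i) R) ∘ₗ ρV (r.right i) = ρW b ∘ₗ R := by
  classical
  let r1 : ∀ i, Coalgebra.Repr K (r.left i) (H × H) := fun i => Coalgebra.Repr.arbitrary K _
  let r2 : ∀ i, Coalgebra.Repr K (r.right i) (H × H) := fun i => Coalgebra.Repr.arbitrary K _
  let Ψ : H →ₗ[K] H →ₗ[K] (V →ₗ[K] W) :=
    LinearMap.mk₂ K (fun x w => ρW x ∘ₗ R ∘ₗ ρV w)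
      (fun x x' w => by simp [map_add, LinearMap.add_comp])
      (fun c x w => by simp [map_smul, LinearMap.smul_comp])
      (fun x w w' => by simp [map_add, LinearMap.comp_add])
      (fun c x w => by simp [map_smul, LinearMap.comp_smul])
  let Φ : H ⊗[K] (H ⊗[K] H) →ₗ[K] (V →ₗ[K] W) := TensorProduct.lift Ψ ∘ₗ Phi1 K H
  have hΦ : ∀ x y z : H, Φ (x ⊗ₜ (y ⊗ₜ z)) = ρW x ∘ₗ R ∘ₗ ρV (SH K H y * z) := by
    intro x y z; rfl
  calc
    ∑ i ∈ r.index, (adjHom K H ρW ρV (r.left i) R) ∘ₗ ρV (r.right i)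
      = ∑ i ∈ r.index, ∑ k ∈ (r1 i).index,
          Φ ((r1 i).left k ⊗ₜ ((r1 i).right k ⊗ₜ r.right i)) := by
        refine Finset.sum_congr rfl fun i _ => ?_
        rw [adjHom_repr K H ρW ρV (r1 i) R, sumComp]
        refine Finset.sum_congr rfl fun k _ => ?_
        rw [hΦ, rho_comp K H hV]
        simp only [LinearMap.comp_assoc]
    _ = ∑ i ∈ r.index, ∑ l ∈ (r2 i).index,
          Φ (r.left i ⊗ₜ ((r2 i).left l ⊗ₜ (r2 i).right l)) := sweedler3 K H Φ r r1 r2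
    _ = ∑ i ∈ r.index, Coalgebra.counit (R := K) (r.right i) • (ρW (r.left i) ∘ₗ R) := by
        refine Finset.sum_congr rfl fun i _ => ?_
        have : ∀ l ∈ (r2 i).index, Φ (r.left i ⊗ₜ ((r2 i).left l ⊗ₜ (r2 i).right l)) =
            ρW (r.left i) ∘ₗ R ∘ₗ ρV (SH K H ((r2 i).left l) * (r2 i).right l) :=
          fun l _ => hΦ _ _ _
        rw [Finset.sum_congr rfl this]
        have hsum : (∑ l ∈ (r2 i).index,
            ρV (SH K H ((r2 i).left l) * (r2 i).right l)) =
            Coalgebra.counit (R := K) (r.right i) • ρV 1 := by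
          rw [← map_sum, repr_antipode_mul K H (r2 i), map_smul]
        calc
          ∑ l ∈ (r2 i).index,
              ρW (r.left i) ∘ₗ R ∘ₗ ρV (SH K H ((r2 i).left l) * (r2 i).right l)
            = ρW (r.left i) ∘ₗ R ∘ₗ (∑ l ∈ (r2 i).index,
                ρV (SH K H ((r2 i).left l) * (r2 i).right l)) := by
              rw [compSum, compSum]
          _ = Coalgebra.counit (R := K) (r.right i) • (ρW (r.left i) ∘ₗ R) := by
              rw [hsum, rho_one K H hV]
              ext v; simp
    _ = ρW b ∘ₗ R := by
        have : ∀ i ∈ r.index,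
            Coalgebra.counit (R := K) (r.right i) • (ρW (r.left i) ∘ₗ R) =
            (ρW (Coalgebra.counit (R := K) (r.right i) • r.left i)) ∘ₗ R := by
          intro i _; rw [map_smul, LinearMap.smul_comp]
        rw [Finset.sum_congr rfl this, ← sumComp, ← map_sum,
          repr_counit_right K H r]

lemma adjHom_comp_repr {ρZ : H →ₗ[K] Z →ₗ[K] Z} {ρW : H →ₗ[K] W →ₗ[K] W}
    {ρV : H →ₗ[K] V →ₗ[K] V} (hW : IsHAction K H ρW) {ι : Type*} {a : H} (r : Coalgebra.Repr K a ι)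
    (R : W →ₗ[K] Z) (R' : V →ₗ[K] W) :
    adjHom K H ρZ ρV a (R ∘ₗ R') =
      ∑ i ∈ r.index, (adjHom K H ρZ ρW (r.left i) R) ∘ₗ (adjHom K H ρW ρV (r.right i) R') := by
  classical
  let r1 : ∀ i, Coalgebra.Repr K (r.left i) (H × H) := fun i => Coalgebra.Repr.arbitrary K _
  let r2 : ∀ i, Coalgebra.Repr K (r.right i) (H × H) := fun i => Coalgebra.Repr.arbitrary K _
  let Ψin : H →ₗ[K] H →ₗ[K] (V →ₗ[K] W) :=
    LinearMap.mk₂ K (fun y z => ρW y ∘ₗ R' ∘ₗ ρV (SH K H z))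
      (fun x x' w => by simp [map_add, LinearMap.add_comp])
      (fun c x w => by simp [map_smul, LinearMap.smul_comp])
      (fun x w w' => by simp [map_add, LinearMap.comp_add])
      (fun c x w => by simp [map_smul, LinearMap.comp_smul])
  let Φ : H ⊗[K] (H ⊗[K] H) →ₗ[K] (V →ₗ[K] Z) := TensorProduct.lift
    (((LinearMap.llcomp K (H ⊗[K] H) (V →ₗ[K] W) (V →ₗ[K] Z)).flip
        (TensorProduct.lift Ψin)) ∘ₗ
      (LinearMap.llcomp K V W Z ∘ₗ (adjHom K H ρZ ρW).flip R))
  have hΦ : ∀ x y z : H, Φ (x ⊗ₜ (y ⊗ₜ z)) =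
      (adjHom K H ρZ ρW x R) ∘ₗ (ρW y ∘ₗ R' ∘ₗ ρV (SH K H z)) := by
    intro x y z; rfl
  have step1 :
      (∑ i ∈ r.index, (adjHom K H ρZ ρW (r.left i) R) ∘ₗ (adjHom K H ρW ρV (r.right i) R')) =
      ∑ i ∈ r.index, ∑ l ∈ (r2 i).index,
        Φ (r.left i ⊗ₜ ((r2 i).left l ⊗ₜ (r2 i).right l)) := by
    refine Finset.sum_congr rfl fun i _ => ?_
    rw [adjHom_repr K H ρW ρV (r2 i) R', compSum]
    exact Finset.sum_congr rfl fun l _ => (hΦ _ _ _).symm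
  rw [step1, ← sweedler3 K H Φ r r1 r2]
  have step2 : ∀ i ∈ r.index,
      (∑ k ∈ (r1 i).index, Φ ((r1 i).left k ⊗ₜ ((r1 i).right k ⊗ₜ r.right i))) =
      ρZ (r.left i) ∘ₗ R ∘ₗ R' ∘ₗ ρV (SH K H (r.right i)) := by
    intro i _
    have : ∀ k ∈ (r1 i).index, Φ ((r1 i).left k ⊗ₜ ((r1 i).right k ⊗ₜ r.right i)) =
        ((adjHom K H ρZ ρW ((r1 i).left k) R) ∘ₗ ρW ((r1 i).right k)) ∘ₗ
          (R' ∘ₗ ρV (SH K H (r.right i))) := by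
      intro k _; rw [hΦ]; simp only [LinearMap.comp_assoc]
    rw [Finset.sum_congr rfl this, ← sumComp,
      ad_rho_collapse K H hW (r1 i) R]
    simp only [LinearMap.comp_assoc]
  rw [Finset.sum_congr rfl step2]
  rw [adjHom_repr K H ρZ ρV r (R ∘ₗ R')]
  exact Finset.sum_congr rfl fun i _ => by simp only [LinearMap.comp_assoc]

def idSU (u : H) : H ⊗[K] H →ₗ[K] H ⊗[K] H :=
  (LinearMap.mulLeft K u ∘ₗ SH K H).lTensor H

@[simp] lemma idSU_tmul (u c d : H) :
    idSU K H u (c ⊗ₜ d) = c ⊗ₜ (u * SH K H d) := rfl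

def lamU (u ub : H) : H ⊗[K] H →ₗ[K] H ⊗[K] H :=
  (LinearMap.mulLeft K u ∘ₗ LinearMap.mulRight K ub ∘ₗ SH K H).lTensor H

@[simp] lemma lamU_tmul (u ub a b : H) :
    lamU K H u ub (a ⊗ₜ b) = a ⊗ₜ (u * (SH K H b * ub)) := rfl

lemma conjEnd_one {ρW : H →ₗ[K] W →ₗ[K] W} {ρV : H →ₗ[K] V →ₗ[K] V}
    (hV : IsHAction K H ρV) (hW : IsHAction K H ρW) (P : V →ₗ[K] W) :
    conjEnd K H ρW ρV 1 P = P := by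
  rw [Algebra.TensorProduct.one_def, conjEnd_tmul, rho_one K H hV, rho_one K H hW]
  simp

lemma CE_key1 {ρW : H →ₗ[K] W →ₗ[K] W} {ρV : H →ₗ[K] V →ₗ[K] V}
    (hV : IsHAction K H ρV) (hW : IsHAction K H ρW) (u ub : H) (x y : H ⊗[K] H)
    (P : V →ₗ[K] W) :
    conjEnd K H ρW ρV (idS K H x * (1 ⊗ₜ ub)) (conjEnd K H ρW ρV (idSU K H u y) P) =
      conjEnd K H ρW ρV (lamU K H u ub (x * y)) P := by
  induction x using TensorProduct.induction_on with
  | zero => simp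
  | add w w' hw hw' =>
    simp only [map_add, add_mul, LinearMap.add_apply, hw, hw']
  | tmul a b =>
    induction y using TensorProduct.induction_on with
    | zero => simp
    | add w w' hw hw' =>
      simp only [map_add, mul_add, add_mul, LinearMap.add_apply, hw, hw']
    | tmul c d =>
      have harg : (u * SH K H d) * (SH K H b * ub) = u * (SH K H (b * d) * ub) := by
        rw [SH_mul]; simp only [mul_assoc]
      rw [idS_tmul, idSU_tmul, Algebra.TensorProduct.tmul_mul_tmul, mul_one,
        Algebra.TensorProduct.tmul_mul_tmul, lamU_tmul, conjEnd_tmul, conjEnd_tmul,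
        conjEnd_tmul, rho_comp K H hW a c, ← harg,
        rho_comp K H hV (u * SH K H d) (SH K H b * ub)]
      simp only [LinearMap.comp_assoc]

lemma CE_key2 {ρW : H →ₗ[K] W →ₗ[K] W} {ρV : H →ₗ[K] V →ₗ[K] V}
    (hV : IsHAction K H ρV) (hW : IsHAction K H ρW) {u ub : H} (hu : ub * u = 1)
    (x y : H ⊗[K] H) (P : V →ₗ[K] W) :
    conjEnd K H ρW ρV (idSU K H u x) (conjEnd K H ρW ρV (idS K H y * (1 ⊗ₜ ub)) P) =
      conjEnd K H ρW ρV (idS K H (x * y)) P := by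
  induction x using TensorProduct.induction_on with
  | zero => simp
  | add w w' hw hw' =>
    simp only [map_add, add_mul, LinearMap.add_apply, hw, hw']
  | tmul c d =>
    induction y using TensorProduct.induction_on with
    | zero => simp
    | add w w' hw hw' =>
      simp only [map_add, mul_add, add_mul, LinearMap.add_apply, hw, hw']
    | tmul a b =>
      have harg : (SH K H b * ub) * (u * SH K H d) = SH K H (d * b) := by
        rw [SH_mul, mul_assoc, ← mul_assoc ub, hu, one_mul]
      rw [idS_tmul, idSU_tmul, Algebra.TensorProduct.tmul_mul_tmul, mul_one,
        Algebra.TensorProduct.tmul_mul_tmul, idS_tmul, conjEnd_tmul, conjEnd_tmul,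
        conjEnd_tmul, rho_comp K H hW c a, ← harg,
        rho_comp K H hV (SH K H b * ub) (u * SH K H d)]
      simp only [LinearMap.comp_assoc]

lemma DFhom_eq_CE {ρW : H →ₗ[K] W →ₗ[K] W} {ρV : H →ₗ[K] V →ₗ[K] V}
    (hV : IsHAction K H ρV) (x : H ⊗[K] H) (P : V →ₗ[K] W) :
    DFhom K H x ρW ρV P = conjEnd K H ρW ρV (thetaT K H x) P := by
  induction x using TensorProduct.induction_on with
  | zero => rw [DFhom_zero]; simp
  | add w w' hw hw' =>
    rw [DFhom_add, map_add, map_add, LinearMap.add_apply, LinearMap.add_apply, hw, hw']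
  | tmul a b =>
    classical
    let r := Coalgebra.Repr.arbitrary K a
    rw [DFhom_tmul, thetaT_tmul, adjHom_repr K H ρW ρV r P, sumComp, ← r.eq, map_sum,
      Finset.sum_mul, map_sum, LinearMap.sum_apply]
    refine Finset.sum_congr rfl fun i _ => ?_
    rw [idS_tmul, Algebra.TensorProduct.tmul_mul_tmul, mul_one, conjEnd_tmul,
      rho_comp K H hV]
    simp only [LinearMap.comp_assoc]

lemma DFhom_id_eq {ρV : H →ₗ[K] V →ₗ[K] V} (hV : IsHAction K H ρV) (x : H ⊗[K] H) :
    DFhom K H x ρV ρV LinearMap.id = ρV (counitLeft K H x) := by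
  induction x using TensorProduct.induction_on with
  | zero => rw [DFhom_zero]; simp
  | add w w' hw hw' => rw [DFhom_add, map_add, map_add, LinearMap.add_apply, hw, hw']
  | tmul a b =>
    classical
    let r := Coalgebra.Repr.arbitrary K a
    rw [DFhom_tmul, adjHom_repr K H ρV ρV r LinearMap.id, sumComp, counitLeft_tmul]
    have : ∀ i ∈ r.index,
        (ρV (r.left i) ∘ₗ LinearMap.id ∘ₗ ρV (SH K H (r.right i))) ∘ₗ ρV b =
        ρV (r.left i * SH K H (r.right i) * b) := by
      intro i _
      rw [rho_comp K H hV, rho_comp K H hV]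
      simp only [LinearMap.comp_assoc, LinearMap.id_comp]
    rw [Finset.sum_congr rfl this, ← map_sum]
    congr 1
    rw [← Finset.sum_mul, repr_mul_antipode K H r, smul_mul_assoc, one_mul]

def Theta (ρZ : H →ₗ[K] Z →ₗ[K] Z) (ρW : H →ₗ[K] W →ₗ[K] W) (ρV : H →ₗ[K] V →ₗ[K] V)
    (P : W →ₗ[K] Z) (Q : V →ₗ[K] W) : H ⊗[K] (H ⊗[K] H) →ₗ[K] (V →ₗ[K] Z) :=
  TensorProduct.lift
    (((LinearMap.llcomp K (H ⊗[K] H) (V →ₗ[K] W) (V →ₗ[K] Z)).flip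
        (TensorProduct.lift
          ((LinearMap.llcomp K V V W ∘ₗ (adjHom K H ρW ρV).flip Q).compl₂ ρV))) ∘ₗ
      (LinearMap.llcomp K V W Z ∘ₗ (adjHom K H ρZ ρW).flip P))

lemma Theta_tmul (ρZ : H →ₗ[K] Z →ₗ[K] Z) (ρW : H →ₗ[K] W →ₗ[K] W)
    (ρV : H →ₗ[K] V →ₗ[K] V) (P : W →ₗ[K] Z) (Q : V →ₗ[K] W) (a b c : H) :
    Theta K H ρZ ρW ρV P Q (a ⊗ₜ (b ⊗ₜ c)) =
      adjHom K H ρZ ρW a P ∘ₗ (adjHom K H ρW ρV b Q ∘ₗ ρV c) := rfl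


lemma GG {ρZ : H →ₗ[K] Z →ₗ[K] Z} {ρW : H →ₗ[K] W →ₗ[K] W} {ρV : H →ₗ[K] V →ₗ[K] V}
    (hV : IsHAction K H ρV) (hW : IsHAction K H ρW) (hZ : IsHAction K H ρZ)
    (P : W →ₗ[K] Z) (Q : V →ₗ[K] W) (x y : H ⊗[K] H) :
    DFhom K H x ρZ ρV
        (sw K H y (adjHom K H ρZ ρW) (adjHom K H ρW ρV) (LinearMap.llcomp K V W Z) P Q) =
      Theta K H ρZ ρW ρV P Q (comulLeft K H x * ins3 K H y) := by
  induction x using TensorProduct.induction_on with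
  | zero => rw [DFhom_zero]; simp
  | add w w' hw hw' =>
    simp only [DFhom_add, sw_add, map_add, mul_add, add_mul, LinearMap.add_apply,
      LinearMap.comp_add, LinearMap.add_comp, hw, hw']
  | tmul a b =>
    induction y using TensorProduct.induction_on with
    | zero => rw [sw_zero, map_zero, map_zero, mul_zero, map_zero]
    | add w w' hw hw' =>
      simp only [DFhom_add, sw_add, map_add, mul_add, add_mul, LinearMap.add_apply,
      LinearMap.comp_add, LinearMap.add_comp, hw, hw']
    | tmul c d =>
      classical
      let r := Coalgebra.Repr.arbitrary K a
      rw [sw_tmul, DFhom_tmul,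
        adjHom_comp_repr K H (ρZ := ρZ) hW r (adjHom K H ρZ ρW c P) (adjHom K H ρW ρV d Q),
        sumComp, comulLeft_tmul, ← r.eq, ins3_tmul]
      rw [show ((TensorProduct.assoc K H H H)
          ((∑ i ∈ r.index, r.left i ⊗ₜ[K] r.right i) ⊗ₜ[K] b)) =
          ∑ i ∈ r.index, r.left i ⊗ₜ (r.right i ⊗ₜ b) by
        rw [TensorProduct.sum_tmul, map_sum]; rfl]
      rw [Finset.sum_mul, map_sum]
      refine Finset.sum_congr rfl fun i _ => ?_
      rw [Algebra.TensorProduct.tmul_mul_tmul, Algebra.TensorProduct.tmul_mul_tmul,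
        mul_one, Theta_tmul, adjHom_mul K H hW hZ, adjHom_mul K H hV hW]
      simp only [LinearMap.comp_apply, LinearMap.comp_assoc]

lemma GG2 {ρZ : H →ₗ[K] Z →ₗ[K] Z} {ρW : H →ₗ[K] W →ₗ[K] W} {ρV : H →ₗ[K] V →ₗ[K] V}
    (hV : IsHAction K H ρV) (hW : IsHAction K H ρW)
    (P : W →ₗ[K] Z) (Q : V →ₗ[K] W) (x y : H ⊗[K] H) :
    Theta K H ρZ ρW ρV P Q (comulRight K H x * ins1 K H y) =
      (DFhom K H x ρZ ρW P) ∘ₗ (DFhom K H y ρW ρV Q) := by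
  induction x using TensorProduct.induction_on with
  | zero => rw [DFhom_zero]; simp
  | add w w' hw hw' =>
    simp only [DFhom_add, sw_add, map_add, mul_add, add_mul, LinearMap.add_apply,
      LinearMap.comp_add, LinearMap.add_comp, hw, hw']
  | tmul a b =>
    induction y using TensorProduct.induction_on with
    | zero => rw [DFhom_zero]; simp
    | add w w' hw hw' =>
      simp only [DFhom_add, sw_add, map_add, mul_add, add_mul, LinearMap.add_apply,
      LinearMap.comp_add, LinearMap.add_comp, hw, hw']
    | tmul c d =>
      classical
      let rb := Coalgebra.Repr.arbitrary K b
      rw [comulRight_tmul, ins1_apply, Algebra.TensorProduct.tmul_mul_tmul, mul_one,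
        ← rb.eq, Finset.sum_mul, TensorProduct.tmul_sum, map_sum]
      have hterm : ∀ j ∈ rb.index,
          Theta K H ρZ ρW ρV P Q (a ⊗ₜ ((rb.left j ⊗ₜ rb.right j) * (c ⊗ₜ d))) =
          adjHom K H ρZ ρW a P ∘ₗ
            (((adjHom K H ρW ρV (rb.left j) (adjHom K H ρW ρV c Q)) ∘ₗ ρV (rb.right j)) ∘ₗ
              ρV d) := by
        intro j _
        rw [Algebra.TensorProduct.tmul_mul_tmul, Theta_tmul, adjHom_mul K H hV hW,
          rho_comp K H hV]
        simp only [LinearMap.comp_apply, LinearMap.comp_assoc]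
      rw [Finset.sum_congr rfl hterm, ← compSum]
      rw [← sumComp K]
      rw [ad_rho_collapse K H hV rb (adjHom K H ρW ρV c Q), DFhom_tmul, DFhom_tmul]
      simp only [LinearMap.comp_assoc]

end Modules

variable {V W Z : Type*} [AddCommGroup V] [Module K V] [AddCommGroup W] [Module K W]
  [AddCommGroup Z] [Module K Z]

/-- for left `H`-modules `V`, `W`, `Z`, the deformation map
`D_F(P) = (f̄^α ▶ P) ∘ (f̄_α ▷)` on `K`-linear maps is bijective, satisfies
`D_F(P ∘_⋆ Q) = D_F(P) ∘ D_F(Q)` where `P ∘_⋆ Q = (f̄^α ▶ P) ∘ (f̄_α ▶ Q)`,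
and `D_F(id) = id`. -/
theorem DFhom_bijective_and_multiplicative (F Finv : H ⊗[K] H) (hF : IsTwist K H F Finv)
    (ρV : H →ₗ[K] V →ₗ[K] V) (hV : IsHAction K H ρV)
    (ρW : H →ₗ[K] W →ₗ[K] W) (hW : IsHAction K H ρW)
    (ρZ : H →ₗ[K] Z →ₗ[K] Z) (hZ : IsHAction K H ρZ) :
    Function.Bijective (DFhom K H Finv ρW ρV)
    ∧ (∀ (P : W →ₗ[K] Z) (Q : V →ₗ[K] W),
        DFhom K H Finv ρZ ρV
            (sw K H Finv (adjHom K H ρZ ρW) (adjHom K H ρW ρV)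
              (LinearMap.llcomp K V W Z) P Q)
          = DFhom K H Finv ρZ ρW P ∘ₗ DFhom K H Finv ρW ρV Q)
    ∧ DFhom K H Finv ρV ρV LinearMap.id = LinearMap.id := by
  refine ⟨?_, ?_, ?_⟩
  · rw [Function.bijective_iff_has_inverse]
    refine ⟨⇑(conjEnd K H ρW ρV (idSU K H (muR K H F) Finv)), ?_, ?_⟩
    · intro P
      rw [DFhom_eq_CE K H hV Finv P, thetaT_inv_eq K H hF,
        CE_key2 K H hV hW (UbarU K H hF) Finv F P, hF.inv_mul]
      have h1 : idS K H (1 : H ⊗[K] H) = 1 := by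
        rw [Algebra.TensorProduct.one_def, idS_tmul, SH_one]
      rw [h1, conjEnd_one K H hV hW]
    · intro P
      rw [DFhom_eq_CE K H hV, thetaT_inv_eq K H hF,
        CE_key1 K H hV hW (muR K H F) (muL K H Finv) F Finv P, hF.mul_inv]
      have h1 : lamU K H (muR K H F) (muL K H Finv) (1 : H ⊗[K] H) = 1 := by
        rw [Algebra.TensorProduct.one_def, lamU_tmul, SH_one, one_mul, UUbar K H hF]
      rw [h1, conjEnd_one K H hV hW]
  · intro P Q
    rw [GG K H hV hW hZ P Q Finv Finv, cocycle_inv K H hF, GG2 K H hV hW P Q Finv Finv]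
  · rw [DFhom_id_eq K H hV Finv, counitLeft_inv K H hF, rho_one K H hV]

end TwistPaper
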